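/- One step of max-distance sketch-and-project, applied after some initial sketch-and-project step, contracts by a factor (1 − γ σ_p²) where γ = 1/max_i Σ_{j≠i} p_j > 1: if x^k was itself produced by a sketch-and-project step (so that f_{i_{k-1}}(x^k) = 0) and x^{k+1} is the max-distance update, then ‖x^{k+1} − x*‖²_B ≤ (1 − γ σ_p²(B,S)) ‖x^k − x*‖²_B for any strictly positive probability vector p. -/

import Mathlib

open Matrix BigOperators

/-- The four Penrose equations characterizing the Moore–Penrose pseudoinverse `P` of `M`. -/
def PenroseInv {k : ℕ} (M P : Matrix (Fin k) (Fin k) ℝ) : Prop :=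
  M * P * M = M ∧ P * M * P = P ∧ (M * P)ᵀ = M * P ∧ (P * M)ᵀ = P * M

/-- The projection matrix `Z = B^{-1/2} Aᵀ S (Sᵀ A B⁻¹ Aᵀ S)† Sᵀ A B^{-1/2}`, where `Bh`
plays the role of `B^{1/2}` and `P` that of the pseudoinverse `(Sᵀ A B⁻¹ Aᵀ S)†`. -/
noncomputable def Zmat {m n τ : ℕ} (A : Matrix (Fin m) (Fin n) ℝ) (B Bh : Matrix (Fin n) (Fin n) ℝ)
    (S : Matrix (Fin m) (Fin τ) ℝ) (P : Matrix (Fin τ) (Fin τ) ℝ) :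
    Matrix (Fin n) (Fin n) ℝ :=
  Bh⁻¹ * Aᵀ * (S * P * Sᵀ) * A * Bh⁻¹

/-- Sketched loss expressed via the projection `Z`:  `f(x) = ‖B^{1/2}(x - x*)‖²_Z`. -/
noncomputable def zloss {m n τ : ℕ} (A : Matrix (Fin m) (Fin n) ℝ)
    (B Bh : Matrix (Fin n) (Fin n) ℝ) (S : Matrix (Fin m) (Fin τ) ℝ)
    (P : Matrix (Fin τ) (Fin τ) ℝ) (xs x : Fin n → ℝ) : ℝ :=
  Bh.mulVec (x - xs) ⬝ᵥ (Zmat A B Bh S P).mulVec (Bh.mulVec (x - xs))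

/-- The spectral constant `σ_p²(B,S)`. -/
noncomputable def sigmaP {m n τ q : ℕ} (A : Matrix (Fin m) (Fin n) ℝ)
    (B Bh : Matrix (Fin n) (Fin n) ℝ) (S : Fin q → Matrix (Fin m) (Fin τ) ℝ)
    (P : Fin q → Matrix (Fin τ) (Fin τ) ℝ) (p : Fin q → ℝ) : ℝ :=
  sInf {r : ℝ | ∃ v, v ≠ 0 ∧ v ∈ Set.range (B⁻¹ * Aᵀ).mulVec ∧
    r = Bh.mulVec v ⬝ᵥ (∑ i, p i • Zmat A B Bh (S i) (P i)).mulVec (Bh.mulVec v) /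
      (v ⬝ᵥ B.mulVec v)}

/-- The spectral constant `σ_∞²(B,S)`. -/
noncomputable def sigmaInf {m n τ q : ℕ} (A : Matrix (Fin m) (Fin n) ℝ)
    (B Bh : Matrix (Fin n) (Fin n) ℝ) (S : Fin q → Matrix (Fin m) (Fin τ) ℝ)
    (P : Fin q → Matrix (Fin τ) (Fin τ) ℝ) : ℝ :=
  sInf {r : ℝ | ∃ v, v ≠ 0 ∧ v ∈ Set.range (B⁻¹ * Aᵀ).mulVec ∧
    r = ⨆ i, Bh.mulVec v ⬝ᵥ (Zmat A B Bh (S i) (P i)).mulVec (Bh.mulVec v) /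
      (v ⬝ᵥ B.mulVec v)}

lemma penrose_unique {k : ℕ} {M P Q : Matrix (Fin k) (Fin k) ℝ}
    (hP : PenroseInv M P) (hQ : PenroseInv M Q) : P = Q := by
  obtain ⟨hP1, hP2, hP3, hP4⟩ := hP
  obtain ⟨hQ1, hQ2, hQ3, hQ4⟩ := hQ
  have hMP : M * P = M * Q := by
    calc M * P = (M * Q * M) * P := by rw [hQ1]
    _ = (M * Q) * (M * P) := by simp only [Matrix.mul_assoc]
    _ = (M * Q)ᵀ * (M * P)ᵀ := by rw [hQ3, hP3]
    _ = Qᵀ * (Mᵀ * (Pᵀ * Mᵀ)) := by simp only [Matrix.transpose_mul, Matrix.mul_assoc]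
    _ = Qᵀ * (M * P * M)ᵀ := by simp only [Matrix.transpose_mul, Matrix.mul_assoc]
    _ = Qᵀ * Mᵀ := by rw [hP1]
    _ = (M * Q)ᵀ := by rw [Matrix.transpose_mul]
    _ = M * Q := hQ3
  have hPM : P * M = Q * M := by
    calc P * M = P * (M * Q * M) := by rw [hQ1]
    _ = (P * M) * (Q * M) := by simp only [Matrix.mul_assoc]
    _ = (P * M)ᵀ * (Q * M)ᵀ := by rw [hP4, hQ4]
    _ = Mᵀ * (Pᵀ * (Mᵀ * Qᵀ)) := by simp only [Matrix.transpose_mul, Matrix.mul_assoc]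
    _ = (M * P * M)ᵀ * Qᵀ := by simp only [Matrix.transpose_mul, Matrix.mul_assoc]
    _ = Mᵀ * Qᵀ := by rw [hP1]
    _ = (Q * M)ᵀ := by rw [Matrix.transpose_mul]
    _ = Q * M := hQ4
  calc P = P * M * P := hP2.symm
  _ = Q * M * P := by rw [hPM]
  _ = Q * (M * P) := by rw [Matrix.mul_assoc]
  _ = Q * (M * Q) := by rw [hMP]
  _ = Q * M * Q := by rw [Matrix.mul_assoc]
  _ = Q := hQ2

lemma penrose_transpose {k : ℕ} {M P : Matrix (Fin k) (Fin k) ℝ}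
    (hM : Mᵀ = M) (h : PenroseInv M P) : Pᵀ = P := by
  obtain ⟨h1, h2, h3, h4⟩ := h
  refine penrose_unique ⟨?_, ?_, ?_, ?_⟩ ⟨h1, h2, h3, h4⟩
  · calc M * Pᵀ * M = Mᵀ * Pᵀ * Mᵀ := by rw [hM]
    _ = (M * P * M)ᵀ := by simp only [Matrix.transpose_mul, Matrix.mul_assoc]
    _ = M := by rw [h1, hM]
  · calc Pᵀ * M * Pᵀ = Pᵀ * Mᵀ * Pᵀ := by rw [hM]
    _ = (P * M * P)ᵀ := by simp only [Matrix.transpose_mul, Matrix.mul_assoc]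
    _ = Pᵀ := by rw [h2]
  · calc (M * Pᵀ)ᵀ = P * Mᵀ := by simp only [Matrix.transpose_mul, Matrix.transpose_transpose]
    _ = P * M := by rw [hM]
    _ = (P * M)ᵀ := h4.symm
    _ = Mᵀ * Pᵀ := by rw [Matrix.transpose_mul]
    _ = M * Pᵀ := by rw [hM]
  · calc (Pᵀ * M)ᵀ = Mᵀ * P := by simp only [Matrix.transpose_mul, Matrix.transpose_transpose]
    _ = M * P := by rw [hM]
    _ = (M * P)ᵀ := h3.symm
    _ = Pᵀ * Mᵀ := by rw [Matrix.transpose_mul]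
    _ = Pᵀ * M := by rw [hM]

lemma quadform_eq {n : ℕ} (C D : Matrix (Fin n) (Fin n) ℝ) (r : Fin n → ℝ) :
    C *ᵥ r ⬝ᵥ D *ᵥ (C *ᵥ r) = r ⬝ᵥ (Cᵀ * D * C) *ᵥ r := by
  simp only [Matrix.dotProduct_mulVec, Matrix.vecMul_vecMul]
  rw [Matrix.mul_assoc, ← Matrix.vecMul_vecMul r, Matrix.vecMul_transpose]

lemma sum_mulVec' {n : ℕ} {ι : Type*} (s : Finset ι) (M : ι → Matrix (Fin n) (Fin n) ℝ)
    (u : Fin n → ℝ) : (∑ i ∈ s, M i) *ᵥ u = ∑ i ∈ s, M i *ᵥ u := by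
  ext j
  simp only [Matrix.mulVec, dotProduct, Matrix.sum_apply, Finset.sum_apply, Finset.sum_mul]
  rw [Finset.sum_comm]

lemma dotProduct_sum' {n : ℕ} {ι : Type*} (s : Finset ι) (u : Fin n → ℝ) (w : ι → Fin n → ℝ) :
    u ⬝ᵥ ∑ i ∈ s, w i = ∑ i ∈ s, u ⬝ᵥ w i := by
  simp only [dotProduct, Finset.sum_apply, Finset.mul_sum]
  rw [Finset.sum_comm]

/-- One step of max-distance sketch-and-project, applied at a point where some sketched
loss vanishes, contracts by `(1 − γ σ_p²)` where
`γ = 1 / max_i Σ_{j ≠ i} p_j > 1` for any strictly positive probability vector `p`. -/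
theorem maxdist_one_step_gamma_contraction {m n τ q : ℕ} (hq : 1 < q)
    (A : Matrix (Fin m) (Fin n) ℝ) (b : Fin m → ℝ)
    (B Bh : Matrix (Fin n) (Fin n) ℝ)
    (hB : B.PosDef) (hBh : Bh.PosDef) (hBhB : Bh * Bh = B)
    (S : Fin q → Matrix (Fin m) (Fin τ) ℝ) (P : Fin q → Matrix (Fin τ) (Fin τ) ℝ)
    (hP : ∀ i, PenroseInv ((S i)ᵀ * A * B⁻¹ * Aᵀ * S i) (P i))
    (p : Fin q → ℝ) (hppos : ∀ i, 0 < p i) (hp1 : ∑ i, p i = 1)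
    (xk xs : Fin n → ℝ) (hxs : A.mulVec xs = b)
    (hx : xk - xs ∈ Set.range (B⁻¹ * Aᵀ).mulVec)
    (hzero : ∃ i₀, zloss A B Bh (S i₀) (P i₀) xs xk = 0)
    (ik : Fin q)
    (hmax : ∀ j, zloss A B Bh (S j) (P j) xs xk ≤ zloss A B Bh (S ik) (P ik) xs xk)
    (xk1 : Fin n → ℝ)
    (hupd : xk1 = xk - (B⁻¹ * Aᵀ * (S ik * P ik * (S ik)ᵀ)).mulVec (A.mulVec xk - b)) :
    1 < (⨆ i, ∑ j ∈ Finset.univ.erase i, p j)⁻¹ ∧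
    (xk1 - xs) ⬝ᵥ B.mulVec (xk1 - xs)
      ≤ (1 - (⨆ i, ∑ j ∈ Finset.univ.erase i, p j)⁻¹ * sigmaP A B Bh S P p)
          * ((xk - xs) ⬝ᵥ B.mulVec (xk - xs)) := by
  classical
  haveI : Nonempty (Fin q) := ⟨ik⟩
  -- basic invertibility and symmetry facts
  have hBdet : IsUnit B.det := (Matrix.isUnit_iff_isUnit_det B).mp hB.isUnit
  have hBhdet : IsUnit Bh.det := (Matrix.isUnit_iff_isUnit_det Bh).mp hBh.isUnit
  have hBB : B * B⁻¹ = 1 := Matrix.mul_nonsing_inv _ hBdet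
  have hBB' : B⁻¹ * B = 1 := Matrix.nonsing_inv_mul _ hBdet
  have hBhBh : Bh * Bh⁻¹ = 1 := Matrix.mul_nonsing_inv _ hBhdet
  have hBhBh' : Bh⁻¹ * Bh = 1 := Matrix.nonsing_inv_mul _ hBhdet
  have hBsymm : Bᵀ = B := by
    have := hB.1; rwa [Matrix.IsHermitian, Matrix.conjTranspose_eq_transpose_of_trivial] at this
  have hBhsymm : Bhᵀ = Bh := by
    have := hBh.1; rwa [Matrix.IsHermitian, Matrix.conjTranspose_eq_transpose_of_trivial] at this
  have hBinvsymm : (B⁻¹)ᵀ = B⁻¹ := by rw [Matrix.transpose_nonsing_inv, hBsymm]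
  -- symmetry of the pseudoinverses
  have hPsymm : ∀ i, (P i)ᵀ = P i := by
    intro i
    refine penrose_transpose ?_ (hP i)
    simp only [Matrix.transpose_mul, Matrix.transpose_transpose, Matrix.transpose_nonsing_inv,
      hBsymm, Matrix.mul_assoc]
  -- the matrices G i = Aᵀ S P Sᵀ A
  set G : Fin q → Matrix (Fin n) (Fin n) ℝ :=
    fun i => Aᵀ * (S i * P i * (S i)ᵀ) * A with hGdef
  have hGsymm : ∀ i, (G i)ᵀ = G i := by
    intro i
    simp only [hGdef, Matrix.transpose_mul, Matrix.transpose_transpose, hPsymm i,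
      Matrix.mul_assoc]
  have hkey : ∀ i, S i * P i * (S i)ᵀ * A * B⁻¹ * Aᵀ * (S i * P i * (S i)ᵀ)
      = S i * P i * (S i)ᵀ := by
    intro i
    have h2 := (hP i).2.1
    calc S i * P i * (S i)ᵀ * A * B⁻¹ * Aᵀ * (S i * P i * (S i)ᵀ)
        = S i * (P i * ((S i)ᵀ * A * B⁻¹ * Aᵀ * S i) * P i) * (S i)ᵀ := by
          simp only [Matrix.mul_assoc]
      _ = S i * P i * (S i)ᵀ := by rw [h2, Matrix.mul_assoc]
  have hGBG : ∀ i, G i * B⁻¹ * G i = G i := by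
    intro i
    calc G i * B⁻¹ * G i
        = Aᵀ * (S i * P i * (S i)ᵀ * A * B⁻¹ * Aᵀ * (S i * P i * (S i)ᵀ)) * A := by
          simp only [hGdef, Matrix.mul_assoc]
      _ = G i := by rw [hkey i]
  -- zloss as a quadratic form in x - xs
  have hBhZBh : ∀ i, Bh * Zmat A B Bh (S i) (P i) * Bh = G i := by
    intro i
    calc Bh * Zmat A B Bh (S i) (P i) * Bh
        = Bh * Bh⁻¹ * (Aᵀ * (S i * P i * (S i)ᵀ) * A) * (Bh⁻¹ * Bh) := by
          simp only [Zmat, Matrix.mul_assoc]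
      _ = G i := by rw [hBhBh, hBhBh', Matrix.one_mul, Matrix.mul_one]
  have hzq : ∀ i (x : Fin n → ℝ),
      zloss A B Bh (S i) (P i) xs x = (x - xs) ⬝ᵥ (G i) *ᵥ (x - xs) := by
    intro i x
    rw [zloss, quadform_eq, hBhsymm, hBhZBh]
  -- nonnegativity of the quadratic forms
  have hGnn : ∀ i (v : Fin n → ℝ), 0 ≤ v ⬝ᵥ (G i) *ᵥ v := by
    intro i v
    have e : v ⬝ᵥ (G i) *ᵥ v = (G i *ᵥ v) ⬝ᵥ B⁻¹ *ᵥ (G i *ᵥ v) := by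
      rw [quadform_eq, hGsymm i, hGBG i]
    rw [e]
    have := (hB.inv.posSemidef).dotProduct_mulVec_nonneg (G i *ᵥ v)
    simpa using this
  -- the supremum constant c and its properties
  set c : ℝ := ⨆ i, ∑ j ∈ Finset.univ.erase i, p j with hcdef
  have herase : ∀ i : Fin q, ∑ j ∈ Finset.univ.erase i, p j = 1 - p i := by
    intro i
    rw [Finset.sum_erase_eq_sub (Finset.mem_univ i), hp1]
  have hbddA : BddAbove (Set.range fun i : Fin q => ∑ j ∈ Finset.univ.erase i, p j) :=
    Set.Finite.bddAbove (Set.finite_range _)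
  obtain ⟨i₁, -, hmin⟩ := Finset.exists_min_image Finset.univ p ⟨ik, Finset.mem_univ ik⟩
  have hclt1 : c < 1 := by
    have h1 : c ≤ 1 - p i₁ := ciSup_le fun i => by
      rw [herase i]; have := hmin i (Finset.mem_univ i); linarith
    have := hppos i₁
    linarith
  have hcpos : 0 < c := by
    have h1 : ∑ j ∈ Finset.univ.erase ik, p j ≤ c := le_ciSup hbddA ik
    have h2 : 0 < ∑ j ∈ Finset.univ.erase ik, p j := by
      obtain ⟨j, hj⟩ := Fintype.exists_ne_of_one_lt_card (by simpa using hq) ik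
      exact Finset.sum_pos (fun i _ => hppos i)
        ⟨j, Finset.mem_erase.mpr ⟨hj, Finset.mem_univ j⟩⟩
    linarith
  have hγ : 1 < c⁻¹ := (one_lt_inv₀ hcpos).mpr hclt1
  refine ⟨hγ, ?_⟩
  set r : Fin n → ℝ := xk - xs with hr
  -- residual identity
  have hres : xk1 - xs = (1 - B⁻¹ * G ik) *ᵥ r := by
    have hAr : A *ᵥ xk - b = A *ᵥ r := by rw [hr, Matrix.mulVec_sub, hxs]
    have hmv : (B⁻¹ * Aᵀ * (S ik * P ik * (S ik)ᵀ)) *ᵥ (A *ᵥ r) = (B⁻¹ * G ik) *ᵥ r := by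
      rw [Matrix.mulVec_mulVec]
      congr 1
      simp only [hGdef, Matrix.mul_assoc]
    rw [hupd, hAr, hmv, sub_right_comm, ← hr, Matrix.sub_mulVec, Matrix.one_mulVec]
  have hTmat : (1 - B⁻¹ * G ik)ᵀ * B * (1 - B⁻¹ * G ik) = B - G ik := by
    have h1 : (1 - B⁻¹ * G ik)ᵀ = 1 - G ik * B⁻¹ := by
      rw [Matrix.transpose_sub, Matrix.transpose_one, Matrix.transpose_mul, hGsymm, hBinvsymm]
    have e1 : (1 - G ik * B⁻¹) * B = B - G ik := by
      rw [Matrix.sub_mul, Matrix.one_mul, Matrix.mul_assoc, hBB', Matrix.mul_one]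
    rw [h1, e1, Matrix.sub_mul, Matrix.mul_sub, Matrix.mul_sub, Matrix.mul_one, Matrix.mul_one,
      ← Matrix.mul_assoc, hBB, Matrix.one_mul, ← Matrix.mul_assoc, hGBG]
    abel
  have hdec : (xk1 - xs) ⬝ᵥ B *ᵥ (xk1 - xs) = r ⬝ᵥ B *ᵥ r - r ⬝ᵥ (G ik) *ᵥ r := by
    rw [hres, quadform_eq, hTmat, Matrix.sub_mulVec, dotProduct_sub]
  set F : ℝ := r ⬝ᵥ (G ik) *ᵥ r with hF
  set E : ℝ := ∑ i, p i * (r ⬝ᵥ (G i) *ᵥ r) with hE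
  have hmaxq : ∀ j, r ⬝ᵥ (G j) *ᵥ r ≤ F := by
    intro j
    have := hmax j
    rwa [hzq j, hzq ik, ← hr] at this
  have hFnn : 0 ≤ F := hGnn ik r
  obtain ⟨i₀, hf0⟩ := hzero
  have hf0' : r ⬝ᵥ (G i₀) *ᵥ r = 0 := by
    rw [hzq i₀ xk, ← hr] at hf0; exact hf0
  have hEcF : E ≤ c * F := by
    have hsplit : E = ∑ i ∈ Finset.univ.erase i₀, p i * (r ⬝ᵥ (G i) *ᵥ r) := by
      rw [hE, ← Finset.sum_erase_add Finset.univ _ (Finset.mem_univ i₀), hf0', mul_zero, add_zero]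
    rw [hsplit]
    calc ∑ i ∈ Finset.univ.erase i₀, p i * (r ⬝ᵥ (G i) *ᵥ r)
        ≤ ∑ i ∈ Finset.univ.erase i₀, p i * F :=
          Finset.sum_le_sum fun i _ => mul_le_mul_of_nonneg_left (hmaxq i) (hppos i).le
      _ = (∑ i ∈ Finset.univ.erase i₀, p i) * F := by rw [Finset.sum_mul]
      _ ≤ c * F := mul_le_mul_of_nonneg_right (le_ciSup hbddA i₀) hFnn
  have hγE : c⁻¹ * E ≤ F := by
    have h := mul_le_mul_of_nonneg_left hEcF (inv_nonneg.mpr hcpos.le)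
    rwa [← mul_assoc, inv_mul_cancel₀ hcpos.ne', one_mul] at h
  have hnum : ∀ v : Fin n → ℝ,
      Bh *ᵥ v ⬝ᵥ (∑ i, p i • Zmat A B Bh (S i) (P i)) *ᵥ (Bh *ᵥ v)
        = ∑ i, p i * (v ⬝ᵥ (G i) *ᵥ v) := by
    intro v
    rw [sum_mulVec', dotProduct_sum']
    refine Finset.sum_congr rfl fun i _ => ?_
    rw [Matrix.smul_mulVec, dotProduct_smul, smul_eq_mul]
    congr 1
    rw [quadform_eq, hBhsymm, hBhZBh]
  have hBpos : ∀ v : Fin n → ℝ, v ≠ 0 → 0 < v ⬝ᵥ B *ᵥ v := by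
    intro v hv
    have := hB.dotProduct_mulVec_pos hv
    simpa using this
  have hlb : ∀ s ∈ {t : ℝ | ∃ v, v ≠ 0 ∧ v ∈ Set.range (B⁻¹ * Aᵀ).mulVec ∧
      t = Bh.mulVec v ⬝ᵥ (∑ i, p i • Zmat A B Bh (S i) (P i)).mulVec (Bh.mulVec v) /
        (v ⬝ᵥ B.mulVec v)}, (0:ℝ) ≤ s := by
    rintro s ⟨v, hv0, -, rfl⟩
    apply div_nonneg
    · rw [hnum v]
      exact Finset.sum_nonneg fun i _ => mul_nonneg (hppos i).le (hGnn i v)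
    · exact (hBpos v hv0).le
  rcases eq_or_ne r 0 with hr0 | hr0
  · have hQ0 : r ⬝ᵥ B *ᵥ r = 0 := by rw [hr0]; simp
    have hF0 : F = 0 := by rw [hF, hr0]; simp
    rw [hdec, hQ0, hF0]
    simp
  · have hQpos : 0 < r ⬝ᵥ B *ᵥ r := hBpos r hr0
    have hmem : (Bh.mulVec r ⬝ᵥ (∑ i, p i • Zmat A B Bh (S i) (P i)).mulVec (Bh.mulVec r)) /
        (r ⬝ᵥ B.mulVec r) ∈ {t : ℝ | ∃ v, v ≠ 0 ∧ v ∈ Set.range (B⁻¹ * Aᵀ).mulVec ∧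
        t = Bh.mulVec v ⬝ᵥ (∑ i, p i • Zmat A B Bh (S i) (P i)).mulVec (Bh.mulVec v) /
          (v ⬝ᵥ B.mulVec v)} := ⟨r, hr0, hx, rfl⟩
    have hσle : sigmaP A B Bh S P p ≤
        (Bh.mulVec r ⬝ᵥ (∑ i, p i • Zmat A B Bh (S i) (P i)).mulVec (Bh.mulVec r)) /
          (r ⬝ᵥ B.mulVec r) := csInf_le ⟨0, hlb⟩ hmem
    rw [hnum r] at hσle
    have hEQ : sigmaP A B Bh S P p * (r ⬝ᵥ B *ᵥ r) ≤ E := (le_div_iff₀ hQpos).mp hσle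
    have h5 : c⁻¹ * (sigmaP A B Bh S P p * (r ⬝ᵥ B *ᵥ r)) ≤ c⁻¹ * E :=
      mul_le_mul_of_nonneg_left hEQ (inv_nonneg.mpr hcpos.le)
    have h6 : c⁻¹ * (sigmaP A B Bh S P p * (r ⬝ᵥ B *ᵥ r)) ≤ F := h5.trans hγE
    have h7 : (1 - c⁻¹ * sigmaP A B Bh S P p) * (r ⬝ᵥ B *ᵥ r)
        = r ⬝ᵥ B *ᵥ r - c⁻¹ * (sigmaP A B Bh S P p * (r ⬝ᵥ B *ᵥ r)) := by ring
    rw [hdec, h7]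
    linarith
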